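/- No random nearest neighbor digraph is a direction random digraph: with n ≥ 3, 1 ≤ k < n−1, d ≥ 1, a norm |·| on ℝ^d, and a Borel probability measure μ on ℝ^d whose n-fold product gives full measure to tie-free configurations, there exist no probability distribution P_G on the graphs with vertex set [n] and no p_d ∈ [1/2,1) such that for every digraph D on [n], μⁿ({x : kNND(x) = D}) = P_G(U(D)) (1−p_d)^{n_as(D)} (2p_d−1)^{n_s(D)}. -/

import Mathlib

open MeasureTheory Finset

/-- A finset of ordered pairs is (the arc set of) a digraph on `Fin n` if it has no loops. -/
def IsDigraph {n : ℕ} (A : Finset (Fin n × Fin n)) : Prop := ∀ p ∈ A, p.1 ≠ p.2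

/-- A finset of unordered pairs is (the edge set of) a graph on `Fin n` if it has no loops. -/
def IsGraph {n : ℕ} (G : Finset (Sym2 (Fin n))) : Prop := ∀ e ∈ G, ¬ e.IsDiag

instance {n : ℕ} : DecidablePred (IsGraph (n := n)) := fun G =>
  decidable_of_iff (∀ e ∈ G, ¬ e.IsDiag) Iff.rfl

/-- The (edge set of the) underlying graph of a digraph. -/
def underlying {n : ℕ} (A : Finset (Fin n × Fin n)) : Finset (Sym2 (Fin n)) :=
  A.image (fun p => Sym2.mk p.1 p.2)

/-- The number of symmetric arc pairs of a digraph. -/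
def nS {n : ℕ} (A : Finset (Fin n × Fin n)) : ℕ :=
  (A.filter fun p => (p.2, p.1) ∈ A ∧ p.1 < p.2).card

/-- The number of asymmetric arcs of a digraph. -/
def nAS {n : ℕ} (A : Finset (Fin n × Fin n)) : ℕ :=
  (A.filter fun p => (p.2, p.1) ∉ A).card

/-- The arc set of the `k` nearest neighbor digraph of the points `x 1, …, x n` in `ℝ^d`. -/
noncomputable def kNND {n d : ℕ} (k : ℕ) (nrm : (Fin d → ℝ) → ℝ)
    (x : Fin n → Fin d → ℝ) : Finset (Fin n × Fin n) :=
  Finset.univ.filter fun p : Fin n × Fin n => p.1 ≠ p.2 ∧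
    (Finset.univ.filter fun l : Fin n =>
      l ≠ p.1 ∧ nrm (x p.1 - x l) < nrm (x p.1 - x p.2)).card < k

/-- A configuration of points is tie-free if for each `i` the distances from `x i` to the
other points are pairwise distinct. -/
def TieFree {n d : ℕ} (nrm : (Fin d → ℝ) → ℝ) (x : Fin n → Fin d → ℝ) : Prop :=
  ∀ i j l : Fin n, j ≠ i → l ≠ i → j ≠ l → nrm (x i - x j) ≠ nrm (x i - x l)

/-- No random nearest neighbor digraph is a direction random digraph. -/
theorem stmt11 {n d k : ℕ} (hn : 3 ≤ n) (hd : 1 ≤ d) (hk : 1 ≤ k) (hkn : k < n - 1)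
    (nrm : (Fin d → ℝ) → ℝ)
    (hnrm0 : ∀ v, nrm v = 0 ↔ v = 0)
    (hnrm_smul : ∀ (c : ℝ) (v : Fin d → ℝ), nrm (c • v) = |c| * nrm v)
    (hnrm_add : ∀ u v : Fin d → ℝ, nrm (u + v) ≤ nrm u + nrm v)
    (μ : Measure (Fin d → ℝ)) [IsProbabilityMeasure μ]
    (htf : ∀ᵐ x ∂(Measure.pi fun _ : Fin n => μ), TieFree nrm x) :
    ¬ ∃ (PG : Finset (Sym2 (Fin n)) → ℝ) (pd : ℝ),
        (∀ G, 0 ≤ PG G) ∧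
        (∑ G ∈ Finset.univ.filter (fun G : Finset (Sym2 (Fin n)) => IsGraph G), PG G = 1) ∧
        1 / 2 ≤ pd ∧ pd < 1 ∧
        ∀ A : Finset (Fin n × Fin n), IsDigraph A →
          (Measure.pi (fun _ : Fin n => μ) {x | kNND k nrm x = A}).toReal =
            PG (underlying A) * (1 - pd) ^ nAS A * (2 * pd - 1) ^ nS A := by

  rintro ⟨PG, pd, hPG0, hsum, hpd1, hpd2, h⟩
  have h3 : 0 < n := by omega
  -- find a graph with positive probability
  obtain ⟨G, hGmem, hGpos⟩ :
      ∃ G ∈ Finset.univ.filter (fun G : Finset (Sym2 (Fin n)) => IsGraph G),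
        (0 : ℝ) < PG G := by
    by_contra hcon
    push_neg at hcon
    have : (∑ G ∈ Finset.univ.filter (fun G : Finset (Sym2 (Fin n)) => IsGraph G), PG G) ≤ 0 :=
      Finset.sum_nonpos hcon
    rw [hsum] at this; linarith
  have hG : IsGraph G := by
    have := Finset.mem_filter.mp hGmem
    exact this.2
  set z : Fin n := ⟨0, h3⟩ with hz
  -- orientation of G in which z has out-degree 0
  set A : Finset (Fin n × Fin n) :=
    Finset.univ.filter (fun p : Fin n × Fin n =>
      Sym2.mk p.1 p.2 ∈ G ∧ (p.2 = z ∨ (p.1 ≠ z ∧ p.1 < p.2))) with hA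
  have memA : ∀ p : Fin n × Fin n,
      p ∈ A ↔ Sym2.mk p.1 p.2 ∈ G ∧ (p.2 = z ∨ (p.1 ≠ z ∧ p.1 < p.2)) := by
    intro p; simp [hA]
  have hAdig : IsDigraph A := by
    intro p hp
    obtain ⟨hpG, -⟩ := (memA p).mp hp
    intro heq
    exact hG _ hpG (by simp [Sym2.mk_isDiag_iff, heq])
  -- no arc leaves z
  have hout : ∀ j : Fin n, (z, j) ∉ A := by
    intro j hj
    obtain ⟨hpG, hcond⟩ := (memA (z, j)).mp hj
    rcases hcond with hc | ⟨hc, -⟩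
    · exact hG _ hpG (Sym2.mk_isDiag_iff.mpr hc.symm)
    · exact hc rfl
  -- no arc has its reverse in A
  have hrev : ∀ p ∈ A, (p.2, p.1) ∉ A := by
    rintro ⟨i, j⟩ hp hq
    obtain ⟨hpG, hcond1⟩ := (memA (i, j)).mp hp
    obtain ⟨-, hcond2⟩ := (memA (j, i)).mp hq
    have hij : i ≠ j := by
      intro heq; exact hG _ hpG (by simp [Sym2.mk_isDiag_iff, heq])
    rcases hcond1 with hc1 | ⟨hc1, hc1'⟩ <;> rcases hcond2 with hc2 | ⟨hc2, hc2'⟩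
    · exact hij (hc2.trans hc1.symm)
    · exact hc2 hc1
    · exact hc1 hc2
    · exact absurd (hc1'.trans hc2') (lt_irrefl _)
  have hnS : nS A = 0 := by
    rw [nS, Finset.card_eq_zero, Finset.filter_eq_empty_iff]
    intro p hp hq
    exact hrev p hp hq.1
  have hnAS : nAS A = A.card := by
    rw [nAS]
    congr 1
    apply Finset.filter_true_of_mem
    exact hrev
  -- underlying A = G
  have hund : underlying A = G := by
    apply Finset.Subset.antisymm
    · intro e he
      obtain ⟨p, hp, rfl⟩ := Finset.mem_image.mp (by unfold underlying at he; exact he)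
      exact ((memA p).mp hp).1
    · intro e he
      induction e using Sym2.ind with
      | _ a b =>
        have hab : a ≠ b := by
          intro heq
          exact hG _ he (by simp [Sym2.mk_isDiag_iff, heq])
        rw [underlying, Finset.mem_image]
        by_cases hbz : b = z
        · exact ⟨(a, b), (memA (a, b)).mpr ⟨he, Or.inl hbz⟩, rfl⟩
        · by_cases haz : a = z
          · refine ⟨(b, a), (memA (b, a)).mpr ⟨by rw [Sym2.eq_swap]; exact he, Or.inl haz⟩,
              Sym2.eq_swap⟩
          · rcases lt_or_gt_of_ne hab with hlt | hlt
            · exact ⟨(a, b), (memA (a, b)).mpr ⟨he, Or.inr ⟨haz, hlt⟩⟩, rfl⟩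
            · exact ⟨(b, a), (memA (b, a)).mpr ⟨by rw [Sym2.eq_swap]; exact he,
                Or.inr ⟨hbz, hlt⟩⟩, Sym2.eq_swap⟩
  -- every kNND has an arc leaving z, so kNND x ≠ A always
  have hempty : {x : Fin n → Fin d → ℝ | kNND k nrm x = A} = ∅ := by
    ext x
    simp only [Set.mem_setOf_eq, Set.mem_empty_iff_false, iff_false]
    intro hx
    have hsne : (Finset.univ.filter (fun l : Fin n => l ≠ z)).Nonempty := by
      refine ⟨⟨1, by omega⟩, ?_⟩
      simp only [Finset.mem_filter, Finset.mem_univ, true_and]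
      intro heq
      have := congrArg Fin.val heq
      simp [hz] at this
    obtain ⟨j, hjmem, hjmin⟩ := Finset.exists_min_image _
      (fun l => nrm (x z - x l)) hsne
    have hjz : j ≠ z := (Finset.mem_filter.mp hjmem).2
    have : (z, j) ∈ kNND k nrm x := by
      rw [kNND, Finset.mem_filter]
      refine ⟨Finset.mem_univ _, fun heq => hjz heq.symm, ?_⟩
      have : (Finset.univ.filter fun l : Fin n =>
          l ≠ z ∧ nrm (x z - x l) < nrm (x z - x j)) = ∅ := by
        rw [Finset.filter_eq_empty_iff]
        rintro l - ⟨hlz, hlt⟩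
        have := hjmin l (by simp [hlz])
        linarith
      rw [this]
      simp only [Finset.card_empty]; omega
    rw [hx] at this
    exact hout j this
  have hkey := h A hAdig
  rw [hempty, hund, hnS, hnAS, pow_zero, mul_one] at hkey
  simp only [measure_empty, ENNReal.toReal_zero] at hkey
  have hpos : (0 : ℝ) < PG G * (1 - pd) ^ A.card :=
    mul_pos hGpos (pow_pos (by linarith) _)
  linarith
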